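/- Let l, k be integers with l ≠ 0 and l dividing k(k−1), let d, m, r ∈ ℕ, and for 1 ≤ i ≤ m and 1 ≤ s ≤ d let a_s^{(i)} be integers with l·a_s^{(i)} + k ∉ {0, −1}. Then for every finite coloring χ : ℤ → {1,…,r} there exist positive integers d′ and c and a color t such that for every i ∈ {1,…,m}, the unique integer wᵢ satisfying l·wᵢ + k = (l·d′ + k)·(l·a₁^{(i)} + k)^{c}·(l·a₂^{(i)} + k)^{c²}·⋯·(l·a_d^{(i)} + k)^{c^d} has χ(wᵢ) = t. -/

import Mathlib

open Finset

namespace PETX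

set_option linter.unusedSectionVars false
set_option linter.unusedVariables false
set_option maxHeartbeats 1000000

variable {V : Type} [AddCommGroup V] [DecidableEq V]

def ev (D : ℕ) (p : ℕ → V) (n : ℕ) : V := ∑ e ∈ range D, n ^ (e+1) • p e

def deriveP (D : ℕ) (q f : ℕ → V) (h : ℕ) : ℕ → V := fun e =>
  (∑ s ∈ Finset.Ico e D, ((s+1).choose (e+1) * h ^ (s - e)) • f s) - q e

lemma ev_zero (D : ℕ) (p : ℕ → V) : ev D p 0 = 0 := by
  simp [ev]

lemma scalar_id (s n h : ℕ) :
    (∑ e ∈ range (s+1), n ^ (e+1) * ((s+1).choose (e+1) * h ^ (s - e))) + h ^ (s+1)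
      = (n + h) ^ (s+1) := by
  rw [add_pow]
  simp only [Nat.cast_id]
  rw [Finset.sum_range_succ' (fun j => n ^ j * h ^ (s+1-j) * ((s+1).choose j))]
  simp only [pow_zero, one_mul, Nat.choose_zero_right, mul_one, Nat.sub_zero]
  congr 1
  refine Finset.sum_congr rfl (fun e he => ?_)
  have : s + 1 - (e + 1) = s - e := by omega
  rw [this]; ring

lemma ev_deriveP (D : ℕ) (q f : ℕ → V) (h n : ℕ) :
    ev D (deriveP D q f h) n = ev D f (n + h) - ev D f h - ev D q n := by
  have key : ev D (deriveP D q f h) n + ev D q n + ev D f h = ev D f (n + h) := by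
    unfold ev deriveP
    rw [← Finset.sum_add_distrib]
    have step1 : ∀ e ∈ range D,
        n ^ (e+1) • ((∑ s ∈ Finset.Ico e D, ((s+1).choose (e+1) * h ^ (s - e)) • f s) - q e)
          + n ^ (e+1) • q e
        = ∑ s ∈ Finset.Ico e D, (n ^ (e+1) * ((s+1).choose (e+1) * h ^ (s - e))) • f s := by
      intro e _
      rw [smul_sub, sub_add_cancel, Finset.smul_sum]
      exact Finset.sum_congr rfl (fun s _ => by simp only [mul_smul])
    rw [Finset.sum_congr rfl step1]
    rw [range_eq_Ico, sum_Ico_Ico_comm, ← Finset.sum_add_distrib]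
    refine Finset.sum_congr rfl (fun s hs => ?_)
    rw [← range_eq_Ico] at hs
    have : (Finset.Ico 0 (s+1)) = range (s+1) := by rw [range_eq_Ico]
    rw [this, ← Finset.sum_smul, ← add_smul, scalar_id]
  have := key
  abel_nf at this ⊢
  linear_combination (norm := abel) this


def coeffAt (D : ℕ) (p : ℕ → V) (e : ℕ) : V := if e < D then p e else 0

def TrivialP (D : ℕ) (p : ℕ → V) : Prop := ∀ e, coeffAt D p e = 0

def IsTop (D : ℕ) (p : ℕ → V) (e : ℕ) : Prop :=
  coeffAt D p e ≠ 0 ∧ ∀ e', e < e' → coeffAt D p e' = 0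

lemma ev_of_trivial {D : ℕ} {p : ℕ → V} (hp : TrivialP D p) (n : ℕ) : ev D p n = 0 := by
  refine Finset.sum_eq_zero (fun e he => ?_)
  have := hp e
  rw [coeffAt, if_pos (mem_range.mp he)] at this
  rw [this, smul_zero]

noncomputable def degF (D : ℕ) (p : ℕ → V) : ℕ :=
  WithBot.unbotD 0 (((range D).filter (fun e => coeffAt D p e ≠ 0)).max)

lemma degF_spec {D : ℕ} {p : ℕ → V} (hp : ¬ TrivialP D p) :
    IsTop D p (degF D p) ∧ degF D p < D := by
  classical
  obtain ⟨e, he⟩ : ∃ e, coeffAt D p e ≠ 0 := by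
    by_contra h; push_neg at h; exact hp h
  have heD : e < D := by
    by_contra h; rw [coeffAt, if_neg h] at he; exact he rfl
  set S := (range D).filter (fun e => coeffAt D p e ≠ 0) with hS
  have hne : S.Nonempty := ⟨e, by simp [hS, heD, he]⟩
  have hmax : degF D p ∈ S ∧ ∀ x ∈ S, x ≤ degF D p := by
    have h1 : S.max = some (S.max' hne) := (Finset.coe_max' hne).symm
    constructor
    · have := S.max'_mem hne
      rwa [degF, ← hS, h1] at *
    · intro x hx
      have := S.le_max' x hx
      rwa [degF, ← hS, h1]
  obtain ⟨hmem, hle⟩ := hmax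
  have h1 : coeffAt D p (degF D p) ≠ 0 := (Finset.mem_filter.mp hmem).2
  have h2 : degF D p < D := mem_range.mp (Finset.mem_filter.mp hmem).1
  refine ⟨⟨h1, fun e' he' => ?_⟩, h2⟩
  by_contra hne'
  have : e' ∈ S := by
    refine Finset.mem_filter.mpr ⟨mem_range.mpr ?_, hne'⟩
    by_contra h; rw [coeffAt, if_neg h] at hne'; exact hne' rfl
  exact absurd (hle e' this) (by omega)

open Classical in
noncomputable def tops (D : ℕ) (F : List (ℕ → V)) (e : ℕ) : Finset V :=
  F.foldr (fun p s => if IsTop D p e then insert (coeffAt D p e) s else s) ∅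

lemma mem_tops {D : ℕ} {F : List (ℕ → V)} {e : ℕ} {x : V} :
    x ∈ tops D F e ↔ ∃ p ∈ F, IsTop D p e ∧ coeffAt D p e = x := by
  classical
  induction F with
  | nil => simp [tops]
  | cons p F ih =>
    by_cases h : IsTop D p e
    · simp only [tops, List.foldr_cons, if_pos h, Finset.mem_insert]
      rw [show (List.foldr _ ∅ F : Finset V) = tops D F e from rfl]
      constructor
      · rintro (rfl | hx)
        · exact ⟨p, List.mem_cons_self .., h, rfl⟩
        · obtain ⟨p', hp', ht, hc⟩ := ih.mp hx
          exact ⟨p', List.mem_cons_of_mem _ hp', ht, hc⟩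
      · rintro ⟨p', hp', ht, hc⟩
        rcases List.mem_cons.mp hp' with rfl | hp'
        · exact Or.inl hc.symm
        · exact Or.inr (ih.mpr ⟨p', hp', ht, hc⟩)
    · simp only [tops, List.foldr_cons, if_neg h]
      rw [show (List.foldr _ ∅ F : Finset V) = tops D F e from rfl]
      rw [ih]
      constructor
      · rintro ⟨p', hp', ht, hc⟩; exact ⟨p', List.mem_cons_of_mem _ hp', ht, hc⟩
      · rintro ⟨p', hp', ht, hc⟩
        rcases List.mem_cons.mp hp' with rfl | hp'
        · exact absurd ht h
        · exact ⟨p', hp', ht, hc⟩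

noncomputable def wtF (D : ℕ) (F : List (ℕ → V)) (e : ℕ) : ℕ := (tops D F e).card

lemma wtF_eq_zero {D e : ℕ} (F : List (ℕ → V)) (he : D ≤ e) : wtF D F e = 0 := by
  rw [wtF, Finset.card_eq_zero]
  ext x
  simp only [Finset.notMem_empty, iff_false, mem_tops]
  rintro ⟨p, _, ⟨hne, _⟩, _⟩
  rw [coeffAt, if_neg (by omega)] at hne
  exact hne rfl

noncomputable def muF (D : ℕ) (F : List (ℕ → V)) : Lex (Fin (D+1) →₀ ℕ) :=
  toLex (Finsupp.equivFunOnFinite.symm (fun i : Fin (D+1) => wtF D F (D - (i:ℕ))))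

lemma mu_lt {D : ℕ} {F G : List (ℕ → V)} (e₀ : ℕ)
    (h1 : wtF D G e₀ < wtF D F e₀) (h2 : ∀ e, e₀ < e → wtF D G e ≤ wtF D F e) :
    muF D G < muF D F := by
  have he₀D : e₀ < D := by
    by_contra h
    rw [wtF_eq_zero F (by omega)] at h1; omega
  set Δ := (range (D+1)).filter (fun e => wtF D G e ≠ wtF D F e) with hΔ
  have hΔne : Δ.Nonempty := ⟨e₀, by simp [hΔ]; exact ⟨by omega, by omega⟩⟩
  set es := Δ.max' hΔne with hes
  have hesΔ : es ∈ Δ := Δ.max'_mem hΔne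
  have hesD : es ≤ D := by have := (Finset.mem_filter.mp hesΔ).1; rw [mem_range] at this; omega
  have he₀es : e₀ ≤ es := Δ.le_max' e₀ (by simp [hΔ]; exact ⟨by omega, by omega⟩)
  have hstrict : wtF D G es < wtF D F es := by
    have hne := (Finset.mem_filter.mp hesΔ).2
    rcases Nat.eq_or_lt_of_le he₀es with h | h
    · rwa [← h]
    · exact lt_of_le_of_ne (h2 es h) hne
  have habove : ∀ e, es < e → wtF D G e = wtF D F e := by
    intro e he
    rcases le_or_gt e D with h | h
    · by_contra hne
      have : e ∈ Δ := Finset.mem_filter.mpr ⟨mem_range.mpr (by omega), hne⟩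
      exact absurd (Δ.le_max' e this) (by omega)
    · rw [wtF_eq_zero F (by omega), wtF_eq_zero G (by omega)]
  show Finsupp.Lex (· < ·) (· < ·) _ _
  rw [Finsupp.lex_def]
  refine ⟨⟨D - es, by omega⟩, fun d hd => ?_, ?_⟩
  · simp only [muF, ofLex_toLex, Finsupp.coe_equivFunOnFinite_symm]
    exact habove _ (by have : (d : ℕ) < D - es := hd; omega)
  · simp only [muF, ofLex_toLex, Finsupp.coe_equivFunOnFinite_symm]
    have : D - (D - es) = es := by omega
    rw [this]; exact hstrict


lemma wtF_def (D : ℕ) (F : List (ℕ → V)) (e : ℕ) : wtF D F e = (tops D F e).card := rfl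

lemma isTop_nontrivial {D : ℕ} {p : ℕ → V} {e : ℕ} (h : IsTop D p e) : ¬ TrivialP D p :=
  fun ht => h.1 (ht e)

lemma coeff_zero_of_deg_lt {D : ℕ} {f : ℕ → V} (hf : ¬ TrivialP D f) {s : ℕ}
    (hs : degF D f < s) (hsD : s < D) : f s = 0 := by
  have := ((degF_spec hf).1).2 s hs
  rwa [coeffAt, if_pos hsD] at this

lemma deriveP_coeff_high {D : ℕ} {q f : ℕ → V} (hf : ¬ TrivialP D f) (hq : ¬ TrivialP D q)
    (hqf : degF D q ≤ degF D f) (h : ℕ) {e : ℕ} (he : degF D f < e) :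
    coeffAt D (deriveP D q f h) e = 0 := by
  rcases lt_or_ge e D with heD | heD
  · rw [coeffAt, if_pos heD, deriveP]
    have h1 : ∀ s ∈ Finset.Ico e D, ((s+1).choose (e+1) * h ^ (s - e)) • f s = 0 := by
      intro s hs
      rw [Finset.mem_Ico] at hs
      rw [coeff_zero_of_deg_lt hf (by omega) hs.2, smul_zero]
    rw [Finset.sum_eq_zero h1]
    rw [coeff_zero_of_deg_lt hq (by omega) heD, sub_zero]
  · rw [coeffAt, if_neg (by omega)]

lemma deriveP_coeff_top {D : ℕ} {q f : ℕ → V} (hf : ¬ TrivialP D f) (h : ℕ) :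
    coeffAt D (deriveP D q f h) (degF D f) = coeffAt D f (degF D f) - coeffAt D q (degF D f) := by
  have hdD : degF D f < D := (degF_spec hf).2
  rw [coeffAt, if_pos hdD, coeffAt, if_pos hdD, coeffAt, if_pos hdD, deriveP]
  congr 1
  rw [Finset.sum_eq_single (degF D f)]
  · simp
  · intro s hs hne
    rw [Finset.mem_Ico] at hs
    rw [coeff_zero_of_deg_lt hf (by omega) hs.2, smul_zero]
  · intro hmem
    exact absurd (Finset.mem_Ico.mpr ⟨le_refl _, hdD⟩) hmem

lemma mu_derived_lt {D : ℕ} {F F' G : List (ℕ → V)} {q : ℕ → V}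
    (hF' : ∀ f, f ∈ F' ↔ (f ∈ F ∧ ¬ TrivialP D f))
    (hq : q ∈ F') (hmin : ∀ f ∈ F', degF D q ≤ degF D f)
    (hG : ∀ g ∈ G, ∃ f ∈ F', ∃ h : ℕ, g = deriveP D q f h) :
    muF D G < muF D F := by
  have hqnt : ¬ TrivialP D q := ((hF' q).mp hq).2
  set e₀ := degF D q with he₀
  have hqtop : IsTop D q e₀ := (degF_spec hqnt).1
  -- tops F' = tops F
  have htopsFF' : ∀ e, tops D F' e = tops D F e := by
    intro e
    ext x
    rw [mem_tops, mem_tops]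
    constructor
    · rintro ⟨p, hp, ht, hc⟩; exact ⟨p, ((hF' p).mp hp).1, ht, hc⟩
    · rintro ⟨p, hp, ht, hc⟩
      exact ⟨p, (hF' p).mpr ⟨hp, isTop_nontrivial ht⟩, ht, hc⟩
  have hwFF' : ∀ e, wtF D F' e = wtF D F e := by
    intro e; rw [wtF_def, wtF_def, htopsFF']
  -- key degree facts for members of G
  have hkey : ∀ g ∈ G, ∀ e, IsTop D g e → e₀ ≤ e →
      ∃ f ∈ F', ¬ TrivialP D f ∧ degF D f = e ∧
        coeffAt D g e = coeffAt D f e - coeffAt D q e := by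
    intro g hgG e htop hee₀
    obtain ⟨f, hfF', h, rfl⟩ := hG g hgG
    have hfnt : ¬ TrivialP D f := ((hF' f).mp hfF').2
    have hdf : e₀ ≤ degF D f := hmin f hfF'
    have hftop : IsTop D f (degF D f) := (degF_spec hfnt).1
    have hfe : degF D f = e := by
      rcases lt_trichotomy (degF D f) e with hlt | heq | hgt
      · exact absurd (deriveP_coeff_high hfnt hqnt hdf h hlt) htop.1
      · exact heq
      · exfalso
        have h1 := deriveP_coeff_top hfnt (q := q) h
        have h2 : coeffAt D q (degF D f) = 0 := hqtop.2 _ (by omega)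
        rw [h2, sub_zero] at h1
        have := htop.2 _ hgt
        rw [h1] at this
        exact hftop.1 this
    exact ⟨f, hfF', hfnt, hfe, by rw [← hfe]; exact deriveP_coeff_top hfnt h⟩
  -- the two counting inequalities
  have h2 : ∀ e, e₀ < e → wtF D G e ≤ wtF D F e := by
    intro e he
    rw [← hwFF' e, wtF_def, wtF_def]
    refine Finset.card_le_card (fun x hx => ?_)
    rw [mem_tops] at hx ⊢
    obtain ⟨g, hgG, htop, hc⟩ := hx
    obtain ⟨f, hfF', hfnt, hfe, hcoeff⟩ := hkey g hgG e htop (by omega)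
    have hq0 : coeffAt D q e = 0 := hqtop.2 e he
    refine ⟨f, hfF', by rw [← hfe]; exact (degF_spec hfnt).1, ?_⟩
    rw [← hc, hcoeff, hq0, sub_zero]
  have h1 : wtF D G e₀ < wtF D F e₀ := by
    rw [← hwFF' e₀, wtF_def, wtF_def]
    set qt := coeffAt D q e₀ with hqt
    have hsub : tops D G e₀ ⊆ ((tops D F' e₀).erase qt).image (fun x => x - qt) := by
      intro x hx
      rw [mem_tops] at hx
      obtain ⟨g, hgG, htop, hc⟩ := hx
      obtain ⟨f, hfF', hfnt, hfe, hcoeff⟩ := hkey g hgG e₀ htop (le_refl _)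
      have hftmem : coeffAt D f e₀ ∈ tops D F' e₀ :=
        mem_tops.mpr ⟨f, hfF', by rw [← hfe]; exact (degF_spec hfnt).1, rfl⟩
      have hne : coeffAt D f e₀ ≠ qt := by
        intro heq
        apply htop.1
        rw [hcoeff, heq, hqt]
        exact sub_self _
      refine Finset.mem_image.mpr ⟨coeffAt D f e₀, Finset.mem_erase.mpr ⟨hne, hftmem⟩, ?_⟩
      rw [← hc, hcoeff]
    have hqtmem : qt ∈ tops D F' e₀ := mem_tops.mpr ⟨q, hq, hqtop, rfl⟩
    calc (tops D G e₀).card ≤ (((tops D F' e₀).erase qt).image (fun x => x - qt)).card :=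
            Finset.card_le_card hsub
      _ ≤ ((tops D F' e₀).erase qt).card := Finset.card_image_le
      _ < (tops D F' e₀).card := by
            rw [Finset.card_erase_of_mem hqtmem]
            have : 0 < (tops D F' e₀).card := Finset.card_pos.mpr ⟨qt, hqtmem⟩
            omega
  exact mu_lt e₀ h1 h2


/-- partial sums of `ev q` along the increments `c`. -/
def Qsum (D : ℕ) (q : ℕ → V) (c : ℕ → ℕ) (p : ℕ) : V := ∑ t ∈ range p, ev D q (c t)

def QSet (D : ℕ) (q : ℕ → V) (A : ℕ) : ℕ → Finset V
  | 0 => {0}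
  | p+1 => Finset.image₂ (· + ·) (QSet D q A p) ((Finset.Icc 1 A).image (ev D q))

lemma Qsum_mem_QSet {D : ℕ} {q : ℕ → V} {c : ℕ → ℕ} {A p : ℕ}
    (hc : ∀ t, t < p → 1 ≤ c t ∧ c t ≤ A) : Qsum D q c p ∈ QSet D q A p := by
  induction p with
  | zero => simp [Qsum, QSet]
  | succ p ih =>
    rw [Qsum, Finset.sum_range_succ]
    exact Finset.mem_image₂.mpr ⟨_, ih (fun t ht => hc t (by omega)), _,
      Finset.mem_image.mpr ⟨c p, Finset.mem_Icc.mpr ⟨(hc p (by omega)).1, (hc p (by omega)).2⟩,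
        rfl⟩, rfl⟩

def QSetAll (D : ℕ) (q : ℕ → V) (A j : ℕ) : Finset V :=
  (range (j+1)).biUnion (fun p => QSet D q A p)

lemma Qsum_mem_QSetAll {D : ℕ} {q : ℕ → V} {c : ℕ → ℕ} {A j p : ℕ} (hp : p ≤ j)
    (hc : ∀ t, t < p → 1 ≤ c t ∧ c t ≤ A) : Qsum D q c p ∈ QSetAll D q A j :=
  Finset.mem_biUnion.mpr ⟨p, mem_range.mpr (by omega), Qsum_mem_QSet hc⟩

def FEset (D : ℕ) (F : List (ℕ → V)) (H : ℕ) : Finset V :=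
  F.foldr (fun f s => s ∪ (range (H+1)).image (ev D f)) ∅

lemma mem_FEset {D : ℕ} {F : List (ℕ → V)} {H : ℕ} {f : ℕ → V} {h : ℕ}
    (hf : f ∈ F) (hh : h ≤ H) : ev D f h ∈ FEset D F H := by
  induction F with
  | nil => cases hf
  | cons g F ih =>
    rw [FEset, List.foldr_cons]
    rcases List.mem_cons.mp hf with rfl | hf
    · exact Finset.mem_union_right _ (Finset.mem_image.mpr ⟨h, mem_range.mpr (by omega), rfl⟩)
    · exact Finset.mem_union_left _ (ih hf)

def PVS (D : ℕ) (F : List (ℕ → V)) : Prop :=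
  ∀ (κ : Type) (_ : Fintype κ), ∃ (N : ℕ) (S : Finset V), 0 < N ∧
    ∀ (χ : V → κ) (b : V), ∃ (u : V) (c : ℕ),
      0 < c ∧ c ≤ N ∧ u - b ∈ S ∧ ∀ f ∈ F, χ (u + ev D f c) = χ u

theorem pvs_step (D : ℕ) (F : List (ℕ → V))
    (IH : ∀ G : List (ℕ → V), muF D G < muF D F → PVS D G) : PVS D F := by
  classical
  intro κ instκ
  set F' := F.filter (fun f => decide (¬ TrivialP D f)) with hF'def
  have hF'iff : ∀ f, f ∈ F' ↔ (f ∈ F ∧ ¬ TrivialP D f) := by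
    intro f; rw [hF'def, List.mem_filter, decide_eq_true_eq]
  by_cases hF'e : F' = []
  · refine ⟨1, {0}, one_pos, fun χ b => ⟨b, 1, one_pos, le_refl _, by simp, fun f hf => ?_⟩⟩
    have htriv : TrivialP D f := by
      by_contra h
      have : f ∈ F' := (hF'iff f).mpr ⟨hf, h⟩
      rw [hF'e] at this
      cases this
    rw [ev_of_trivial htriv, add_zero]
  · -- pick q of minimal degree
    obtain ⟨q₀, hq₀⟩ := List.exists_mem_of_ne_nil F' hF'e
    set dset := (F'.map (degF D)).toFinset with hdset
    have hdne : dset.Nonempty := ⟨degF D q₀, by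
      rw [hdset, List.mem_toFinset]; exact List.mem_map_of_mem hq₀⟩
    obtain ⟨q, hqF', hqdeg⟩ : ∃ q ∈ F', degF D q = dset.min' hdne := by
      have h1 : dset.min' hdne ∈ (F'.map (degF D)).toFinset := by
        rw [← hdset]; exact dset.min'_mem hdne
      rw [List.mem_toFinset, List.mem_map] at h1
      obtain ⟨q, hq1, hq2⟩ := h1
      exact ⟨q, hq1, hq2⟩
    have hmin : ∀ f ∈ F', degF D q ≤ degF D f := by
      intro f hf
      rw [hqdeg]
      exact dset.min'_le _ (by rw [hdset, List.mem_toFinset]; exact List.mem_map_of_mem hf)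
    clear hqdeg hdne hq₀
    -- the focusing chain
    have CL : ∀ (j : ℕ), ∀ (κ' : Type) (_ : Fintype κ'), ∃ (N : ℕ) (S : Finset V), 0 < N ∧
        ∀ (χ : V → κ') (b : V), ∃ (x : V) (c : ℕ → ℕ),
          (∀ t, t < j → 0 < c t ∧ c t ≤ N) ∧ x - b ∈ S ∧
          ∀ p p' : ℕ, p < p' → p' ≤ j → ∀ f ∈ F',
            χ (x + Qsum D q c p + ev D f (∑ t ∈ Finset.Ico p p', c t))
              = χ (x + Qsum D q c p') := by
      intro j
      induction j with
      | zero =>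
        intro κ' _
        exact ⟨1, {0}, one_pos, fun χ b =>
          ⟨b, fun _ => 1, fun t ht => by omega, by simp,
            fun p p' h h' f hf => by omega⟩⟩
      | succ j ihj =>
        intro κ' instκ'
        obtain ⟨A, S_A, hA0, hCLj⟩ := ihj (κ' × κ') inferInstance
        set H := j * A with hHdef
        set G := (List.range (H+1)).flatMap (fun h => F'.map (fun f => deriveP D q f h))
          with hGdef
        have hGmem : ∀ f ∈ F', ∀ h ≤ H, deriveP D q f h ∈ G := by
          intro f hf h hh
          rw [hGdef, List.mem_flatMap]
          exact ⟨h, List.mem_range.mpr (by omega), List.mem_map_of_mem hf⟩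
        have hGmem' : ∀ g ∈ G, ∃ f ∈ F', ∃ h : ℕ, g = deriveP D q f h := by
          intro g hg
          rw [hGdef, List.mem_flatMap] at hg
          obtain ⟨h, _, hg⟩ := hg
          obtain ⟨f, hf, rfl⟩ := List.mem_map.mp hg
          exact ⟨f, hf, h, rfl⟩
        have hPVSG : PVS D G := IH G (mu_derived_lt hF'iff hqF' hmin hGmem')
        set W : Finset V :=
          Finset.image₂ (· + ·) (Finset.image₂ (· + ·) S_A (QSetAll D q A j)) (FEset D F' H)
          with hWdef
        obtain ⟨N_G, S_G, hNG0, hPG⟩ := hPVSG (↥W → κ') inferInstance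
        refine ⟨max A N_G, Finset.image₂ (· + ·) (Finset.image₂ (· + ·) S_A S_G)
          ((Finset.Icc 1 N_G).image (fun ν => - ev D q ν)), by omega, ?_⟩
        intro χ b₀
        set ψ : V → (↥W → κ') := fun v e => χ (v + (e : V)) with hψdef
        obtain ⟨u', n, hn0, hnN, hu'S, hid⟩ := hPG ψ b₀
        set χ₂ : V → κ' × κ' := fun v => (χ v, χ (v - ev D q n)) with hχ₂def
        obtain ⟨xt, c, hc, hxS, hlinks⟩ := hCLj χ₂ u'
        set c' : ℕ → ℕ := fun t => if t < j then c t else n with hc'def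
        have hQeq : ∀ p'', p'' ≤ j → Qsum D q c' p'' = Qsum D q c p'' := by
          intro p'' hp''
          refine Finset.sum_congr rfl (fun t ht => ?_)
          rw [hc'def]
          simp only [if_pos (show t < j by have := mem_range.mp ht; omega)]
        have hσeq : ∀ a b, b ≤ j → (∑ t ∈ Finset.Ico a b, c' t) = ∑ t ∈ Finset.Ico a b, c t := by
          intro a b hb
          refine Finset.sum_congr rfl (fun t ht => ?_)
          rw [hc'def]
          simp only [if_pos (show t < j by have := (Finset.mem_Ico.mp ht).2; omega)]
        refine ⟨xt - ev D q n, c', ?_, ?_, ?_⟩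
        · intro t ht
          rcases lt_or_ge t j with h | h
          · rw [hc'def]; simp only [if_pos h]
            exact ⟨(hc t h).1, le_trans (hc t h).2 (le_max_left _ _)⟩
          · rw [hc'def]; simp only [if_neg (by omega : ¬ t < j)]
            exact ⟨hn0, le_trans hnN (le_max_right _ _)⟩
        · have heq : (xt - ev D q n) - b₀ = ((xt - u') + (u' - b₀)) + (- ev D q n) := by abel
          rw [heq]
          exact Finset.mem_image₂.mpr ⟨_, Finset.mem_image₂.mpr ⟨_, hxS, _, hu'S, rfl⟩, _,
            Finset.mem_image.mpr ⟨n, Finset.mem_Icc.mpr ⟨hn0, hnN⟩, rfl⟩, rfl⟩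
        · intro p p' hpp' hp'j f hf
          rcases Nat.lt_succ_iff_lt_or_eq.mp (Nat.lt_succ_of_le hp'j) with hcase | hcase
          · -- p' ≤ j : use second component of old links
            have hp'le : p' ≤ j := by omega
            have hl := congrArg Prod.snd (hlinks p p' hpp' hp'le f hf)
            simp only [hχ₂def] at hl
            rw [hQeq p (by omega), hQeq p' hp'le, hσeq p p' hp'le]
            have e1 : (xt - ev D q n) + Qsum D q c p + ev D f (∑ t ∈ Finset.Ico p p', c t)
                = (xt + Qsum D q c p + ev D f (∑ t ∈ Finset.Ico p p', c t)) - ev D q n := by abel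
            have e2 : (xt - ev D q n) + Qsum D q c p'
                = (xt + Qsum D q c p') - ev D q n := by abel
            rw [e1, e2]
            exact hl
          · -- p' = j+1
            have hpj : p ≤ j := by omega
            subst hcase
            have hhH : (∑ t ∈ Finset.Ico p j, c t) ≤ H := by
              have h1 : ∀ t ∈ Finset.Ico p j, c t ≤ A :=
                fun t ht => (hc t (Finset.mem_Ico.mp ht).2).2
              calc (∑ t ∈ Finset.Ico p j, c t) ≤ (Finset.Ico p j).card • A :=
                    Finset.sum_le_card_nsmul _ _ _ h1
                _ = (j - p) * A := by rw [Nat.card_Ico, smul_eq_mul]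
                _ ≤ j * A := Nat.mul_le_mul_right _ (by omega)
            have hsum : (∑ t ∈ Finset.Ico p (j+1), c' t) = (∑ t ∈ Finset.Ico p j, c t) + n := by
              rw [Finset.sum_Ico_succ_top hpj, hσeq p j (le_refl j)]
              congr 1
              rw [hc'def]; simp
            have hQp : Qsum D q c' p = Qsum D q c p := hQeq p hpj
            have hQtop : Qsum D q c' (j+1) = Qsum D q c j + ev D q n := by
              rw [Qsum, Finset.sum_range_succ]
              congr 1
              · exact hQeq j (le_refl _)
              · rw [hc'def]; simp
            set g := deriveP D q f (∑ t ∈ Finset.Ico p j, c t) with hgdef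
            have hgG : g ∈ G := hGmem f hf _ hhH
            set eV := ((xt - u') + Qsum D q c p) + ev D f (∑ t ∈ Finset.Ico p j, c t) with heVdef
            have heW : eV ∈ W := by
              rw [hWdef, heVdef]
              exact Finset.mem_image₂.mpr ⟨_, Finset.mem_image₂.mpr ⟨_, hxS, _,
                Qsum_mem_QSetAll hpj (fun t ht => ⟨(hc t (by omega)).1, (hc t (by omega)).2⟩),
                rfl⟩, _, mem_FEset hf hhH, rfl⟩
            have hident := congrFun (hid g hgG) ⟨eV, heW⟩
            simp only [hψdef] at hident
            rw [hgdef, ev_deriveP] at hident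
            have key1 : χ (xt + Qsum D q c p
                  + ev D f ((∑ t ∈ Finset.Ico p j, c t) + n) - ev D q n)
                = χ (xt + Qsum D q c p + ev D f (∑ t ∈ Finset.Ico p j, c t)) := by
              have e1 : u' + (ev D f (n + (∑ t ∈ Finset.Ico p j, c t))
                    - ev D f (∑ t ∈ Finset.Ico p j, c t) - ev D q n) + eV
                  = xt + Qsum D q c p + ev D f (n + (∑ t ∈ Finset.Ico p j, c t))
                    - ev D q n := by
                rw [heVdef]; abel
              have e2 : u' + eV
                  = xt + Qsum D q c p + ev D f (∑ t ∈ Finset.Ico p j, c t) := by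
                rw [heVdef]; abel
              rw [e1, e2] at hident
              rw [Nat.add_comm (∑ t ∈ Finset.Ico p j, c t) n]
              exact hident
            rw [hQp, hsum, hQtop]
            have e3 : (xt - ev D q n) + Qsum D q c p
                  + ev D f ((∑ t ∈ Finset.Ico p j, c t) + n)
                = xt + Qsum D q c p + ev D f ((∑ t ∈ Finset.Ico p j, c t) + n)
                  - ev D q n := by abel
            have e4 : (xt - ev D q n) + (Qsum D q c j + ev D q n)
                = xt + Qsum D q c j := by abel
            rw [e3, e4, key1]
            rcases Nat.lt_or_ge p j with hplt | hpge
            · have hl := congrArg Prod.fst (hlinks p j hplt (le_refl j) f hf)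
              simp only [hχ₂def] at hl
              exact hl
            · have hpeq : p = j := by omega
              subst hpeq
              simp [Finset.Ico_self, ev_zero]
    -- conclude PVS F via pigeonhole
    set n := Fintype.card κ with hndef
    obtain ⟨N, S, hN0, hCL⟩ := CL n κ instκ
    refine ⟨(n+1) * (N+1), Finset.image₂ (· + ·) S (QSetAll D q N n), by positivity, ?_⟩
    intro χ b
    obtain ⟨x, c, hc, hxS, hlinks⟩ := hCL χ b
    have hcard : Fintype.card κ < Fintype.card (Fin (n+1)) := by
      rw [Fintype.card_fin]; omega
    obtain ⟨p, p', hne, heqc⟩ := Fintype.exists_ne_map_eq_of_card_lt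
      (fun p : Fin (n+1) => χ (x + Qsum D q c (p : ℕ))) hcard
    have key : ∀ p p' : Fin (n+1), (p : ℕ) < (p' : ℕ) →
        χ (x + Qsum D q c (p : ℕ)) = χ (x + Qsum D q c (p' : ℕ)) →
        ∃ (u : V) (cc : ℕ), 0 < cc ∧ cc ≤ (n+1) * (N+1) ∧
          u - b ∈ Finset.image₂ (· + ·) S (QSetAll D q N n) ∧
          ∀ f ∈ F, χ (u + ev D f cc) = χ u := by
      intro p p' hlt heq
      have hp'n : (p' : ℕ) ≤ n := by omega
      refine ⟨x + Qsum D q c (p : ℕ), ∑ t ∈ Finset.Ico (p : ℕ) (p' : ℕ), c t, ?_, ?_, ?_, ?_⟩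
      · refine Finset.sum_pos (fun t ht => (hc t ?_).1) (Finset.nonempty_Ico.mpr hlt)
        have := (Finset.mem_Ico.mp ht).2; omega
      · have h1 : ∀ t ∈ Finset.Ico (p : ℕ) (p' : ℕ), c t ≤ N := by
          intro t ht
          refine (hc t ?_).2
          have := (Finset.mem_Ico.mp ht).2; omega
        calc (∑ t ∈ Finset.Ico (p : ℕ) (p' : ℕ), c t)
            ≤ (Finset.Ico (p : ℕ) (p' : ℕ)).card • N := Finset.sum_le_card_nsmul _ _ _ h1
          _ = ((p' : ℕ) - (p : ℕ)) * N := by rw [Nat.card_Ico, smul_eq_mul]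
          _ ≤ (n+1) * (N+1) := by
              have : (p' : ℕ) - (p : ℕ) ≤ n := by omega
              calc ((p' : ℕ) - (p : ℕ)) * N ≤ n * N := Nat.mul_le_mul_right _ this
                _ ≤ (n+1) * (N+1) := Nat.mul_le_mul (by omega) (by omega)
      · have heq2 : (x + Qsum D q c (p : ℕ)) - b = (x - b) + Qsum D q c (p : ℕ) := by abel
        rw [heq2]
        exact Finset.mem_image₂.mpr ⟨_, hxS, _,
          Qsum_mem_QSetAll (by omega) (fun t ht => ⟨(hc t (by omega)).1, (hc t (by omega)).2⟩),
          rfl⟩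
      · intro f hfF
        by_cases htriv : TrivialP D f
        · rw [ev_of_trivial htriv, add_zero]
        · have hfF' : f ∈ F' := (hF'iff f).mpr ⟨hfF, htriv⟩
          have hl := hlinks (p : ℕ) (p' : ℕ) hlt hp'n f hfF'
          rw [hl, ← heq]
    rcases Nat.lt_or_ge (p : ℕ) (p' : ℕ) with h | h
    · exact key p p' h heqc
    · have h2 : (p' : ℕ) < (p : ℕ) := by
        rcases Nat.lt_or_ge (p' : ℕ) (p : ℕ) with h' | h'
        · exact h'
        · exfalso; exact hne (Fin.ext (by omega))
      exact key p' p h2 heqc.symm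


theorem pvs_all (D : ℕ) (F : List (ℕ → V)) : PVS D F := by
  have wf : WellFounded ((· < ·) : Lex (Fin (D+1) →₀ ℕ) → Lex (Fin (D+1) →₀ ℕ) → Prop) :=
    (inferInstance : WellFoundedLT (Lex (Fin (D+1) →₀ ℕ))).wf
  suffices h : ∀ w, ∀ F : List (ℕ → V), muF D F = w → PVS D F from h _ F rfl
  intro w
  refine wf.induction (C := fun w => ∀ F : List (ℕ → V), muF D F = w → PVS D F) w ?_
  intro w ih F hF
  refine pvs_step D F (fun G hG => ?_)
  exact ih (muF D G) (hF ▸ hG) G rfl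


section App
variable {m d : ℕ}

/-- coefficient polynomials for the application -/
def pc (i : Fin m) : ℕ → (Fin m → Fin d → ℤ) := fun e j s =>
  if j = i ∧ (s : ℕ) = e then 1 else 0

lemma evp (i : Fin m) (c : ℕ) (j : Fin m) (s : Fin d) :
    (ev d (pc i) c) j s = if j = i then ((c : ℤ) ^ ((s : ℕ) + 1)) else 0 := by
  have h1 : (ev d (pc i) c) j s = ∑ e ∈ range d, (c ^ (e+1)) • (pc i e j s) := by
    rw [ev]
    rw [Finset.sum_apply, Finset.sum_apply]
    rfl
  rw [h1]
  by_cases hj : j = i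
  · subst hj
    rw [if_pos rfl]
    rw [Finset.sum_eq_single (s : ℕ)]
    · simp [pc, nsmul_eq_mul]
    · intro e he hne
      simp [pc, Ne.symm hne]
    · intro hs
      exact absurd (mem_range.mpr s.isLt) hs
  · rw [if_neg hj]
    refine Finset.sum_eq_zero (fun e he => ?_)
    simp [pc, hj]

def Pic (A : Fin m → Fin d → ℤ) (v : Fin m → Fin d → ℤ) : ℤ :=
  ∏ i, ∏ s, (A i s) ^ (v i s).toNat

lemma Pic_ne_zero {A : Fin m → Fin d → ℤ} (hA : ∀ i s, A i s ≠ 0) (v) : Pic A v ≠ 0 := by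
  rw [Pic]
  refine Finset.prod_ne_zero_iff.mpr (fun i _ => ?_)
  exact Finset.prod_ne_zero_iff.mpr (fun s _ => pow_ne_zero _ (hA i s))

lemma Pic_split {A : Fin m → Fin d → ℤ} (u : Fin m → Fin d → ℤ)
    (hu : ∀ j s, 0 ≤ u j s) (i : Fin m) (c : ℕ) :
    Pic A (u + ev d (pc i) c) = Pic A u * ∏ s, (A i s) ^ (c ^ ((s : ℕ) + 1)) := by
  set w : Fin m → Fin d → ℤ := u + ev d (pc i) c with hw
  have inner : ∀ j, (∏ s, A j s ^ (w j s).toNat)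
      = (∏ s, A j s ^ (u j s).toNat)
        * ∏ s, A j s ^ (if j = i then c ^ ((s:ℕ)+1) else 0) := by
    intro j
    rw [← Finset.prod_mul_distrib]
    refine Finset.prod_congr rfl (fun s _ => ?_)
    have h1 : w j s = u j s + (if j = i then ((c:ℤ) ^ ((s:ℕ)+1)) else 0) := by
      have h0 : w j s = u j s + (ev d (pc i) c) j s := by rw [hw]; rfl
      rw [h0, evp]
    rw [h1]
    by_cases hj : j = i
    · rw [if_pos hj, if_pos hj]
      have h2 : ((c : ℤ) ^ ((s:ℕ)+1)) = ((c ^ ((s:ℕ)+1) : ℕ) : ℤ) := by push_cast; ring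
      rw [h2, Int.toNat_add (hu j s) (by positivity), Int.toNat_natCast, pow_add]
    · rw [if_neg hj, if_neg hj, add_zero, pow_zero, mul_one]
  calc Pic A w
      = ∏ j, ((∏ s, A j s ^ (u j s).toNat)
          * ∏ s, A j s ^ (if j = i then c ^ ((s:ℕ)+1) else 0)) :=
        Finset.prod_congr rfl (fun j _ => inner j)
    _ = (∏ j, ∏ s, A j s ^ (u j s).toNat)
          * ∏ j, ∏ s, A j s ^ (if j = i then c ^ ((s:ℕ)+1) else 0) :=
        Finset.prod_mul_distrib
    _ = Pic A u * ∏ s, A i s ^ (c ^ ((s:ℕ)+1)) := by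
        congr 1
        rw [Finset.prod_eq_single i]
        · exact Finset.prod_congr rfl (fun s _ => by rw [if_pos rfl])
        · intro j _ hj
          exact Finset.prod_eq_one (fun s _ => by rw [if_neg hj, pow_zero])
        · intro h; exact absurd (Finset.mem_univ i) h

end App

lemma dvd_mul_sub {l k : ℤ} (x y : ℤ) (hkk : l ∣ k * k - k)
    (hx : l ∣ x - k) (hy : l ∣ y - k) : l ∣ x * y - k := by
  have h : x * y - k = x * (y - k) + (x - k) * k + (k * k - k) := by ring
  rw [h]
  exact dvd_add (dvd_add (Dvd.dvd.mul_left hy x) (Dvd.dvd.mul_right hx k)) hkk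

lemma pow_cond {l k : ℤ} (hkk : l ∣ k * k - k) (A : ℤ) (hA : l ∣ A - k) (e : ℕ) :
    A ^ e = 1 ∨ l ∣ A ^ e - k := by
  induction e with
  | zero => left; exact pow_zero _
  | succ e ih =>
    rw [pow_succ]
    rcases ih with h | h
    · rw [h, one_mul]; right; exact hA
    · right; exact dvd_mul_sub _ _ hkk h hA

lemma prod_cond {l k : ℤ} {ι : Type*} (s : Finset ι) (g : ι → ℤ) (hkk : l ∣ k * k - k)
    (hg : ∀ i ∈ s, g i = 1 ∨ l ∣ g i - k) : (∏ i ∈ s, g i) = 1 ∨ l ∣ (∏ i ∈ s, g i) - k := by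
  refine Finset.prod_induction _ (fun x => x = 1 ∨ l ∣ x - k) ?_ (Or.inl rfl) hg
  intro x y hx hy
  rcases hx with rfl | hx
  · rw [one_mul]; exact hy
  · rcases hy with rfl | hy
    · rw [mul_one]; right; exact hx
    · right; exact dvd_mul_sub _ _ hkk hx hy

lemma w_pos {l k P Pi w : ℤ} (heq : l * w + k = P * Pi)
    (hcase : (0 < l ∧ |k| + 2 ≤ P * Pi) ∨ (l < 0 ∧ P * Pi ≤ -(|k| + 2))) : 0 < w := by
  rcases hcase with ⟨hl, hP⟩ | ⟨hl, hP⟩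
  · have h1 : 2 ≤ l * w := by
      have := le_abs_self k
      linarith
    by_contra hw
    push_neg at hw
    have h2 : 0 ≤ l * (-w) := mul_nonneg hl.le (by linarith)
    nlinarith
  · have h1 : l * w ≤ -2 := by
      have := neg_abs_le k
      linarith
    by_contra hw
    push_neg at hw
    have h2 : 0 ≤ (-l) * (-w) := mul_nonneg (by linarith) (by linarith)
    nlinarith

lemma sel_pos {l k Pi : ℤ} (hl : l ≠ 0) (hPi : 1 ≤ Pi) :
    (0 < l ∧ |k| + 2 ≤ (l * (2*(|k|+1)) + k) * Pi) ∨
    (l < 0 ∧ (l * (2*(|k|+1)) + k) * Pi ≤ -(|k|+2)) := by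
  have hk1 := le_abs_self k
  have hk2 := neg_abs_le k
  have hk0 := abs_nonneg k
  rcases lt_or_gt_of_ne hl with hneg | hpos
  · right
    refine ⟨hneg, ?_⟩
    have hP : l * (2*(|k|+1)) + k ≤ -(|k|+2) := by nlinarith
    have h2 : 0 ≤ (Pi - 1) * (-(l * (2*(|k|+1)) + k)) :=
      mul_nonneg (by linarith) (by linarith)
    nlinarith
  · left
    refine ⟨hpos, ?_⟩
    have hP : |k| + 2 ≤ l * (2*(|k|+1)) + k := by nlinarith
    have h2 : 0 ≤ (Pi - 1) * (l * (2*(|k|+1)) + k) := mul_nonneg (by linarith) (by linarith)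
    nlinarith

lemma sel_neg {l k Pi : ℤ} (hl : l ≠ 0) (hPi : Pi ≤ -1) :
    (0 < l ∧ |k| + 2 ≤ (l * (-(2*(|k|+1))) + k) * Pi) ∨
    (l < 0 ∧ (l * (-(2*(|k|+1))) + k) * Pi ≤ -(|k|+2)) := by
  have hk1 := le_abs_self k
  have hk2 := neg_abs_le k
  have hk0 := abs_nonneg k
  rcases lt_or_gt_of_ne hl with hneg | hpos
  · right
    refine ⟨hneg, ?_⟩
    have hP : |k| + 2 ≤ l * (-(2*(|k|+1))) + k := by nlinarith
    have h2 : 0 ≤ (-(Pi + 1)) * (l * (-(2*(|k|+1))) + k) :=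
      mul_nonneg (by linarith) (by linarith)
    nlinarith
  · left
    refine ⟨hpos, ?_⟩
    have hP : l * (-(2*(|k|+1))) + k ≤ -(|k|+2) := by nlinarith
    have h2 : 0 ≤ (-(Pi + 1)) * (-(l * (-(2*(|k|+1))) + k)) :=
      mul_nonneg (by linarith) (by linarith)
    nlinarith


end PETX

open PETX Finset

set_option maxHeartbeats 1000000 in
/-- An analogue of the polynomial van der Waerden theorem for symmetric polynomials. -/
theorem stmt6 (l k : ℤ) (hl : l ≠ 0) (hdvd : l ∣ k * (k - 1)) (d m r : ℕ)
    (a : Fin m → Fin d → ℤ)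
    (ha : ∀ i s, l * a i s + k ≠ 0 ∧ l * a i s + k ≠ -1)
    (χ : ℤ → Fin r) :
    ∃ d' : ℤ, 0 < d' ∧ ∃ c : ℕ, 0 < c ∧ ∃ t : Fin r, ∀ i : Fin m,
      ∃ w : ℤ,
        l * w + k = (l * d' + k) * ∏ s : Fin d, (l * a i s + k) ^ c ^ ((s : ℕ) + 1) ∧
        χ w = t := by
  classical
  rcases Nat.eq_zero_or_pos r with hr | hr
  · subst hr; exact (χ 0).elim0
  set A : Fin m → Fin d → ℤ := fun i s => l * a i s + k with hA
  set F : List (ℕ → (Fin m → Fin d → ℤ)) := (List.finRange m).map (fun i => pc i) with hF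
  have hkk : l ∣ k * k - k := by
    rw [show k * k - k = k * (k - 1) by ring]; exact hdvd
  have hAk : ∀ i s, l ∣ A i s - k := fun i s => ⟨a i s, by rw [hA]; ring⟩
  have hA0 : ∀ i s, A i s ≠ 0 := fun i s => (ha i s).1
  have hdvdP : ∀ P : ℤ, l ∣ P - k → ∀ v, l ∣ P * Pic A v - k := by
    intro P hP v
    have hPic : Pic A v = 1 ∨ l ∣ Pic A v - k := by
      rw [Pic]
      refine prod_cond _ _ hkk (fun i _ => ?_)
      exact prod_cond _ _ hkk (fun s _ => pow_cond hkk _ (hAk i s) _)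
    rcases hPic with h | h
    · rw [h, mul_one]; exact hP
    · exact dvd_mul_sub _ _ hkk hP h
  set wfn : ℤ → (Fin m → Fin d → ℤ) → ℤ := fun P v => (P * Pic A v - k) / l with hwfn
  have hwf_eq : ∀ P : ℤ, l ∣ P - k → ∀ v, l * (wfn P v) + k = P * Pic A v := by
    intro P hP v
    rw [hwfn]
    simp only
    rw [Int.mul_ediv_cancel' (hdvdP P hP v)]
    ring
  set Pp : ℤ := l * (2*(|k|+1)) + k with hPp
  set Pm : ℤ := l * (-(2*(|k|+1))) + k with hPm
  have hPpk : l ∣ Pp - k := ⟨2*(|k|+1), by rw [hPp]; ring⟩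
  have hPmk : l ∣ Pm - k := ⟨-(2*(|k|+1)), by rw [hPm]; ring⟩
  set χh : (Fin m → Fin d → ℤ) → (Fin r × Fin r) := fun v => (χ (wfn Pp v), χ (wfn Pm v))
    with hχh
  obtain ⟨N, S, hN, main⟩ := pvs_all d F (Fin r × Fin r) inferInstance
  set B : ℕ := S.sup (fun v => Finset.univ.sup
    (fun js : Fin m × Fin d => (v js.1 js.2).natAbs)) with hB
  have hSB : ∀ v ∈ S, ∀ j s, -(B:ℤ) ≤ v j s := by
    intro v hv j s
    have h1 : (v j s).natAbs ≤ B := by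
      rw [hB]
      exact le_trans (Finset.le_sup (f := fun js : Fin m × Fin d => (v js.1 js.2).natAbs)
        (Finset.mem_univ (j, s)))
        (Finset.le_sup (f := fun v : Fin m → Fin d → ℤ => Finset.univ.sup
          (fun js : Fin m × Fin d => (v js.1 js.2).natAbs)) hv)
    have h2 : |v j s| ≤ (B : ℤ) := by
      rw [Int.abs_eq_natAbs]
      exact_mod_cast h1
    exact (abs_le.mp h2).1
  set b : Fin m → Fin d → ℤ := fun _ _ => (B : ℤ) with hb
  obtain ⟨u, c, hc0, hcN, huS, hmono⟩ := main χh b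
  have hu0 : ∀ j s, 0 ≤ u j s := by
    intro j s
    have h1 := hSB _ huS j s
    have h2 : (u - b) j s = u j s - B := by rw [hb]; rfl
    rw [h2] at h1
    linarith
  have hPicu : Pic A u ≠ 0 := Pic_ne_zero hA0 u
  have hsplit : ∀ i : Fin m,
      Pic A (u + ev d (pc i) c) = Pic A u * ∏ s, (A i s) ^ (c ^ ((s:ℕ)+1)) :=
    fun i => Pic_split u hu0 i c
  have hmem : ∀ i : Fin m, pc (d := d) i ∈ F := fun i => by
    rw [hF]; exact List.mem_map_of_mem (List.mem_finRange i)
  rcases hPicu.lt_or_gt with hneg | hpos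
  · -- Pic A u ≤ -1 : use Pm
    have hPi1 : Pic A u ≤ -1 := by
      have := Int.lt_iff_add_one_le.mp hneg
      linarith
    refine ⟨wfn Pm u, w_pos (hwf_eq Pm hPmk u) (sel_neg hl hPi1), c, hc0,
      χ (wfn Pm u), fun i => ?_⟩
    refine ⟨wfn Pm (u + ev d (pc i) c), ?_, ?_⟩
    · rw [hwf_eq Pm hPmk (u + ev d (pc i) c), hsplit i, ← mul_assoc,
        ← hwf_eq Pm hPmk u]
    · exact congrArg Prod.snd (hmono (pc i) (hmem i))
  · have hPi1 : 1 ≤ Pic A u := by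
      have := Int.lt_iff_add_one_le.mp hpos
      linarith
    refine ⟨wfn Pp u, w_pos (hwf_eq Pp hPpk u) (sel_pos hl hPi1), c, hc0,
      χ (wfn Pp u), fun i => ?_⟩
    refine ⟨wfn Pp (u + ev d (pc i) c), ?_, ?_⟩
    · rw [hwf_eq Pp hPpk (u + ev d (pc i) c), hsplit i, ← mul_assoc,
        ← hwf_eq Pp hPpk u]
    · exact congrArg Prod.fst (hmono (pc i) (hmem i))
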